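/- arXiv:2105.10364 — 9 statements merged into one kernel-verified Lean document; each statement's English description precedes it below -/
import Mathlib

section
/- If (a, m, x, y, z) is a solution in positive integers of (2am+1)^x + (2m)^y = (2am-1)^z with m > 1 and x odd, then y = v_2(a)/(v_2(m)+1) + 1, where v_2 denotes the 2-adic valuation. -/
lemma aux_binom (n : ℤ) (x : ℕ) : ∃ A : ℤ, (1+n)^x = 1 + x*n + n^2*A := by
  induction x with
  | zero => exact ⟨0, by ring⟩
  | succ k ih =>
      obtain ⟨A, hA⟩ := ih
      refine ⟨A + k + n*A, ?_⟩
      have : (1+n)^(k+1) = (1+n)^k * (1+n) := by ring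
      rw [this, hA]
      push_cast
      ring

theorem stmt2 (a m x y z : ℕ) (ha : 0 < a) (hm : 1 < m) (hx : 0 < x) (hy : 0 < y)
    (hz : 0 < z) (hxodd : Odd x) (h : (2*a*m+1)^x + (2*m)^y = (2*a*m-1)^z) :
    y = padicValNat 2 a / (padicValNat 2 m + 1) + 1 := by
  haveI : Fact (Nat.Prime 2) := ⟨Nat.prime_two⟩
  have hN1 : 1 ≤ 2*a*m := by nlinarith
  have hZ : ((2*a*m:ℤ)+1)^x + (2*m)^y = ((2*a*m:ℤ)-1)^z := by
    have := congrArg (fun n : ℕ => (n : ℤ)) h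
    push_cast [Nat.cast_sub hN1] at this
    push_cast
    linarith [this]
  -- z is even
  have hzeven : Even z := by
    rcases Nat.even_or_odd z with he | ho
    · exact he
    · exfalso
      have d1 : (2*m:ℤ) ∣ ((2*a*m:ℤ)+1)^x - 1^x := by
        have h1 : (2*(m:ℤ)) ∣ ((2*a*m:ℤ)+1) - 1 := ⟨a, by ring⟩
        exact h1.trans (sub_dvd_pow_sub_pow _ _ x)
      have d2 : (2*m:ℤ) ∣ ((2*a*m:ℤ)-1)^z - (-1)^z := by
        have h1 : (2*(m:ℤ)) ∣ ((2*a*m:ℤ)-1) - (-1) := ⟨a, by ring⟩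
        exact h1.trans (sub_dvd_pow_sub_pow _ _ z)
      have d3 : (2*m:ℤ) ∣ (2*m)^y := dvd_pow_self (2*m:ℤ) hy.ne'
      have hodd : ((-1:ℤ))^z = -1 := ho.neg_one_pow
      have : (2*m:ℤ) ∣ 2 := by
        have : (2*m:ℤ) ∣ (((2*a*m:ℤ)-1)^z - (-1)^z) - (((2*a*m:ℤ)+1)^x - 1^x) - (2*m)^y := by
          exact dvd_sub (dvd_sub d2 d1) d3
        have e : (((2*a*m:ℤ)-1)^z - (-1)^z) - (((2*a*m:ℤ)+1)^x - 1^x) - (2*m)^y = 2 := by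
          rw [hodd, one_pow]
          linarith [hZ]
        rwa [e] at this
      have : (2*m:ℤ) ≤ 2 := Int.le_of_dvd (by norm_num) this
      have : (m:ℤ) ≥ 2 := by exact_mod_cast hm
      linarith
  -- binomial expansions
  obtain ⟨A, hA⟩ := aux_binom (2*a*m : ℤ) x
  obtain ⟨B, hB⟩ := aux_binom (-(2*a*m) : ℤ) z
  have hBpow : ((2*a*m:ℤ)-1)^z = (1 + (-(2*a*m:ℤ)))^z := by
    have : (1 + (-(2*a*m:ℤ))) = -(((2*a*m:ℤ))-1) := by ring
    rw [this, hzeven.neg_pow]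
  -- key factorization
  set c : ℤ := -((x:ℤ)+(z:ℤ)) + (2*a*m) * (B - A) with hc_def
  have hc : (2*(m:ℤ))^y = (2*a*m) * c := by
    have h1 : ((2*a*m:ℤ)+1)^x = 1 + x*(2*a*m) + (2*a*m)^2*A := by
      have : ((2*a*m:ℤ)+1) = 1 + (2*a*m) := by ring
      rw [this, hA]
    have h2 : ((2*a*m:ℤ)-1)^z = 1 + z*(-(2*a*m)) + (2*a*m)^2*B := by
      rw [hBpow, hB]; ring_nf
    have := hZ
    rw [h1, h2] at this
    push_cast at this ⊢
    linear_combination this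
  -- c is odd
  have hxzodd : Odd (x + z) := hxodd.add_even hzeven
  have hcodd : ¬ (2:ℤ) ∣ c := by
    intro hd
    have : (2:ℤ) ∣ ((x:ℤ)+(z:ℤ)) := by
      have h2 : (2:ℤ) ∣ (2*a*m) * (B - A) := ⟨a*m*(B-A), by ring⟩
      have := dvd_sub h2 hd
      have e : (2*(a:ℤ)*m) * (B - A) - c = (x:ℤ)+(z:ℤ) := by rw [hc_def]; ring
      rwa [e] at this
    have : (2:ℤ) ∣ ((x+z : ℕ) : ℤ) := by push_cast; exact this
    have : 2 ∣ (x+z) := by exact_mod_cast this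
    exact (Nat.not_even_iff_odd.mpr hxzodd) (even_iff_two_dvd.mpr this)
  -- c is positive
  have hcpos : 0 < c := by
    by_contra hle
    push_neg at hle
    have h1 : (0:ℤ) < (2*(m:ℤ))^y := by positivity
    have h2 : (2*(a:ℤ)*m) * c ≤ 0 :=
      mul_nonpos_of_nonneg_of_nonpos (by positivity) hle
    rw [hc] at h1; linarith
  -- move to ℕ
  set cn : ℕ := c.toNat with hcn_def
  have hcnat : (cn : ℤ) = c := Int.toNat_of_nonneg hcpos.le
  have hNat : (2*m)^y = 2*a*m*cn := by
    have : ((2*m)^y : ℤ) = ((2*a*m*cn : ℕ) : ℤ) := by push_cast [hcnat]; linear_combination hc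
    exact_mod_cast this
  have hcnodd : ¬ 2 ∣ cn := by
    intro hd
    exact hcodd (by exact_mod_cast hcnat ▸ (Int.natCast_dvd_natCast.mpr hd))
  have hcn0 : cn ≠ 0 := by
    intro h0; exact absurd (h0 ▸ dvd_zero 2) hcnodd
  -- valuations
  have hm0 : m ≠ 0 := by omega
  have ha0 : a ≠ 0 := ha.ne'
  have v2m : padicValNat 2 (2*m) = padicValNat 2 m + 1 := by
    rw [padicValNat.mul (by norm_num) hm0, padicValNat.self one_lt_two]
    omega
  have v2am : padicValNat 2 (2*a*m) = padicValNat 2 a + padicValNat 2 m + 1 := by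
    rw [mul_assoc, padicValNat.mul (by norm_num) (by positivity),
      padicValNat.mul ha0 hm0, padicValNat.self one_lt_two]
    omega
  have vL : padicValNat 2 ((2*m)^y) = y * (padicValNat 2 m + 1) := by
    rw [padicValNat.pow (2*m) y, v2m]
  have vR : padicValNat 2 (2*a*m*cn) = padicValNat 2 a + padicValNat 2 m + 1 := by
    rw [padicValNat.mul (by positivity) hcn0, v2am,
      padicValNat.eq_zero_of_not_dvd hcnodd]
  have key : y * (padicValNat 2 m + 1) = padicValNat 2 a + padicValNat 2 m + 1 := by
    rw [← vL, ← vR, hNat]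
  -- conclude
  set s := padicValNat 2 m
  set t := padicValNat 2 a
  have hy1 : y = (y - 1) + 1 := by omega
  have ht : (y-1)*(s+1) = t := by
    have : ((y-1)+1) * (s+1) = t + s + 1 := by rw [← hy1]; exact key
    have e : ((y-1)+1)*(s+1) = (y-1)*(s+1) + (s+1) := by ring
    omega
  rw [← ht, Nat.mul_div_cancel _ (by omega : 0 < s+1)]
  omega
end

section
/- If (a, m, x, y, z) is a solution in positive integers of (2am+1)^x + (2m)^y = (2am-1)^z with m > 1, then 2am ≥ (2m)^y · (x+z)^{-y}. -/
lemma aux_binom_s3 (u : ℤ) : ∀ n : ℕ, u^2 ∣ (1+u)^n - (1 + n*u)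
  | 0 => by simp
  | (n+1) => by
      have h := aux_binom_s3 u n
      have e : (1+u)^(n+1) - (1 + (n+1 : ℕ)*u)
          = (1+u)*((1+u)^n - (1 + n*u)) + n*u^2 := by push_cast; ring
      rw [e]
      exact dvd_add (h.mul_left _) ⟨n, by ring⟩

theorem stmt3 (a m x y z : ℕ) (ha : 0 < a) (hm : 1 < m) (hx : 0 < x) (hy : 0 < y)
    (hz : 0 < z) (h : (2*a*m+1)^x + (2*m)^y = (2*a*m-1)^z) :
    (2*a*m : ℝ) ≥ (2*m : ℝ)^y * ((x+z : ℝ))^(-(y : ℤ)) := by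
  have ham1 : 1 ≤ 2*a*m := by nlinarith
  -- cast equation to ℤ
  have heq : ((2*a*m : ℤ)+1)^x + (2*m : ℤ)^y = ((2*a*m : ℤ)-1)^z := by
    have := congrArg (Nat.cast : ℕ → ℤ) h
    push_cast [Nat.cast_sub ham1] at this
    linarith [this]
  set U : ℤ := 2*a*m with hU
  set M : ℤ := 2*m with hM
  have hMU : M ∣ U := ⟨a, by rw [hU, hM]; push_cast; ring⟩
  -- z is even
  have hzeven : Even z := by
    by_contra hodd
    have hodd : Odd z := Nat.not_even_iff_odd.mp hodd
    have h1 : U ∣ (U+1)^x - 1 := by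
      simpa using sub_dvd_pow_sub_pow (U+1) 1 x
    have h2 : U ∣ (U-1)^z - (-1)^z := by
      simpa using sub_dvd_pow_sub_pow (U-1) (-1) z
    rw [hodd.neg_one_pow] at h2
    have h3 : M ∣ M^y := dvd_pow_self M hy.ne'
    have h4 : M ∣ (2:ℤ) := by
      have e : (2:ℤ) = ((U-1)^z - (-1)) - ((U+1)^x - 1) - M^y := by
        linarith [heq]
      rw [e]
      exact dvd_sub (dvd_sub (hMU.trans h2) (hMU.trans h1)) h3
    have := Int.le_of_dvd (by norm_num) h4
    rw [hM] at this
    push_cast at this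
    nlinarith
  -- key congruence: U^2 ∣ M^y + (x+z)*U
  have hkey : U^2 ∣ M^y + ((x:ℤ)+z)*U := by
    obtain ⟨t, ht⟩ := aux_binom_s3 U x
    obtain ⟨s, hs⟩ := aux_binom_s3 (-U) z
    have hz2 : (U-1)^z = (1-U)^z := by
      rw [← hzeven.neg_pow (1-U)]; ring_nf
    have e : M^y + ((x:ℤ)+z)*U = U^2 * (s - t) := by
      have h1 : (1+U)^x = (1 + (x:ℤ)*U) + U^2*t := by linarith [ht]
      have h2 : (1-U)^z = (1 + (z:ℤ)*(-U)) + U^2*s := by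
        have : (-U)^2 = U^2 := by ring
        rw [this] at hs
        have e2 : (1 + -U) = 1 - U := by ring
        rw [e2] at hs
        linarith [hs]
      have h3 : M^y = (1-U)^z - (U+1)^x := by
        rw [← hz2]; linarith [heq]
      rw [h3]; linear_combination h2 - h1
    exact ⟨s - t, e⟩
  -- transfer to ℕ
  have hkeyN : (2*a*m)^2 ∣ (2*m)^y + (x+z)*(2*a*m) := by
    have : ((2*a*m : ℕ)^2 : ℤ) ∣ (((2*m)^y + (x+z)*(2*a*m) : ℕ) : ℤ) := by
      push_cast
      convert hkey using 2
    exact_mod_cast this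
  -- divisibility
  have hm0 : (2*m) ≠ 0 := by omega
  have hu0 : (2*a*m) ≠ 0 := by omega
  have hxz0 : (x+z) ≠ 0 := by omega
  have hdvd : (2*m)^y ∣ (2*a*m) * (x+z)^y := by
    rw [← Nat.factorization_le_iff_dvd (pow_ne_zero _ hm0) (by positivity)]
    rw [Nat.factorization_pow, Nat.factorization_mul hu0 (pow_ne_zero _ hxz0),
      Nat.factorization_pow]
    intro p
    simp only [Finsupp.coe_smul, Pi.smul_apply, smul_eq_mul, Finsupp.coe_add, Pi.add_apply]
    set c := (2*m).factorization p with hc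
    set v := (2*a*m).factorization p with hv
    set e := (x+z).factorization p with he
    by_cases hpp : p.Prime
    case neg =>
      have hc0 : c = 0 := by rw [hc]; exact Nat.factorization_eq_zero_of_not_prime _ hpp
      have he0 : e = 0 := by rw [he]; exact Nat.factorization_eq_zero_of_not_prime _ hpp
      simp [hc0, he0]
    by_cases hce : c ≤ e
    · have : y*c ≤ y*e := Nat.mul_le_mul_left y hce
      omega
    push_neg at hce
    have hcv : c ≤ v := by
      have hd : (2*m) ∣ (2*a*m) := ⟨a, by ring⟩
      have := (Nat.factorization_le_iff_dvd hm0 hu0).mpr hd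
      exact this p
    have hye : e ≤ y*e := Nat.le_mul_of_pos_left e hy
    suffices hs : y*c ≤ v + e by omega
    by_contra hlt
    push_neg at hlt
    have hA : p^(v+e+1) ∣ (2*m)^y := by
      rw [hpp.pow_dvd_iff_le_factorization (pow_ne_zero _ hm0), Nat.factorization_pow]
      simpa using hlt
    have hB : p^(v+e+1) ∣ (2*a*m)^2 := by
      rw [hpp.pow_dvd_iff_le_factorization (pow_ne_zero _ hu0), Nat.factorization_pow]
      simp only [Finsupp.coe_smul, Pi.smul_apply, smul_eq_mul, ← hv]
      omega
    have hsum : p^(v+e+1) ∣ (2*m)^y + (x+z)*(2*a*m) := hB.trans hkeyN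
    have hC : p^(v+e+1) ∣ (x+z)*(2*a*m) := by
      have := Nat.dvd_sub hsum hA
      simpa using this
    have : v+e+1 ≤ ((x+z)*(2*a*m)).factorization p := by
      rw [← hpp.pow_dvd_iff_le_factorization (Nat.mul_ne_zero hxz0 hu0)]
      exact hC
    rw [Nat.factorization_mul hxz0 hu0] at this
    simp only [Finsupp.coe_add, Pi.add_apply, ← hv, ← he] at this
    omega
  have hle : (2*m)^y ≤ (2*a*m) * (x+z)^y := Nat.le_of_dvd (by positivity) hdvd
  -- final real inequality
  rw [ge_iff_le, zpow_neg, zpow_natCast, ← div_eq_mul_inv,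
    div_le_iff₀ (by positivity)]
  exact_mod_cast hle
end

section
/- The Diophantine equation (2am+1)^x + 2m = (2am-1)^z has no solutions in positive integers a > 1, m > 1, x, z. -/
theorem stmt5 : ¬ ∃ (a m x z : ℕ), 1 < a ∧ 1 < m ∧ 0 < x ∧ 0 < z ∧
    (2*a*m+1)^x + 2*m = (2*a*m-1)^z := by
  rintro ⟨a, m, x, z, ha, hm, hx, hz, heq⟩
  set n := 2*a*m with hn
  have hn8 : 8 ≤ n := by
    calc 8 = 2*2*2 := by norm_num
    _ ≤ 2*a*m := by
      apply Nat.mul_le_mul (Nat.mul_le_mul le_rfl ha) hm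
  have h1n : 1 ≤ n := by omega
  -- cast equation to ZMod n
  have hcast : ((2*a*m+1 : ℕ)^x + 2*m : ZMod n) = ((2*a*m-1 : ℕ)^z : ZMod n) := by
    exact_mod_cast congrArg (Nat.cast : ℕ → ZMod n) heq
  have hnz : ((n : ℕ) : ZMod n) = 0 := ZMod.natCast_self n
  have hL : ((2*a*m+1 : ℕ) : ZMod n) = 1 := by
    push_cast
    rw [show ((2:ZMod n)*a*m) = ((2*a*m : ℕ) : ZMod n) by push_cast; ring, ← hn, hnz]
    ring
  have hR : ((2*a*m-1 : ℕ) : ZMod n) = -1 := by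
    have : (2*a*m-1 : ℕ) + 1 = n := by omega
    have := congrArg (Nat.cast : ℕ → ZMod n) this
    push_cast at this
    rw [hnz] at this
    linear_combination this
  rw [hL, hR, one_pow] at hcast
  have h2m : ((2*m : ℕ) : ZMod n) = (-1)^z - 1 := by
    push_cast at hcast ⊢
    linear_combination hcast
  rcases Nat.even_or_odd z with he | ho
  · rw [he.neg_one_pow] at h2m
    simp at h2m
    have hdvd : n ∣ 2*m := (ZMod.natCast_eq_zero_iff _ _).mp (by exact_mod_cast h2m)
    have : n ≤ 2*m := Nat.le_of_dvd (by omega) hdvd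
    have : 2*m < n := by
      calc 2*m < 2*2*m := by omega
      _ ≤ 2*a*m := by apply Nat.mul_le_mul_right; omega
    omega
  · rw [ho.neg_one_pow] at h2m
    have : ((2*m+2 : ℕ) : ZMod n) = 0 := by push_cast at h2m ⊢; linear_combination h2m
    have hdvd : n ∣ 2*m+2 := (ZMod.natCast_eq_zero_iff _ _).mp this
    have hle : n ≤ 2*m+2 := Nat.le_of_dvd (by omega) hdvd
    have : 2*m+2 < n := by
      have : 4*m ≤ 2*a*m := by
        calc 4*m = 2*2*m := by ring
        _ ≤ 2*a*m := by apply Nat.mul_le_mul_right; omega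
      omega
    omega
end

section
/- The Diophantine equation (2a+1)^x + 2 = (2a-1)^z with a > 1 in positive integers x, z has only the solution (a, x, z) = (2, 2, 3). -/
set_option linter.unnecessarySeqFocus false
set_option linter.unreachableTactic false
set_option linter.unusedTactic false

set_option maxRecDepth 100000

lemma pow_mod_eq {M : Type*} [Monoid M] (a : M) (k n : ℕ) (hk : a ^ k = 1) :
    a ^ n = a ^ (n % k) := by
  conv_lhs => rw [← Nat.div_add_mod n k]
  rw [pow_add, pow_mul, hk, one_pow, one_mul]

lemma aux53 (x z : ℕ) (hx : 0 < x) (hz : 0 < z) (h : 5^x + 2 = 3^z) :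
    x = 2 ∧ z = 3 := by
  by_cases hx3 : 3 ≤ x
  · exfalso
    -- mod 125
    have h125 : (3 : ZMod 125)^z = 2 := by
      have hc := congrArg (Nat.cast : ℕ → ZMod 125) h
      push_cast at hc
      obtain ⟨y, rfl⟩ := Nat.exists_eq_add_of_le hx3
      rw [pow_add, (by decide : (5 : ZMod 125)^3 = 0), zero_mul, zero_add] at hc
      exact hc.symm
    have hz43 : z % 100 = 43 := by
      have h1 : (3 : ZMod 125)^(z % 100) = 2 := by
        rw [← pow_mod_eq (3 : ZMod 125) 100 z (by decide)]; exact h125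
      exact (by decide : ∀ r < 100, (3 : ZMod 125)^r = 2 → r = 43) _
        (Nat.mod_lt _ (by norm_num)) h1
    -- mod 101
    have hx25 : x % 25 = 3 := by
      have hc := congrArg (Nat.cast : ℕ → ZMod 101) h
      push_cast at hc
      rw [pow_mod_eq (3 : ZMod 101) 100 z (by decide), hz43] at hc
      have h5 : (5 : ZMod 101)^x = 24 := by
        have h26 : (5 : ZMod 101)^x + 2 = 24 + 2 := by
          rw [hc]; decide
        exact add_right_cancel h26
      have h1 : (5 : ZMod 101)^(x % 25) = 24 := by
        rw [← pow_mod_eq (5 : ZMod 101) 25 x (by decide)]; exact h5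
      exact (by decide : ∀ r < 25, (5 : ZMod 101)^r = 24 → r = 3) _
        (Nat.mod_lt _ (by norm_num)) h1
    -- mod 401
    have hc := congrArg (Nat.cast : ℕ → ZMod 401) h
    push_cast at hc
    rw [pow_mod_eq (5 : ZMod 401) 25 x (by decide), hx25] at hc
    have h3 : (3 : ZMod 401)^z = 127 := by
      rw [← hc]; decide
    rw [← Nat.div_add_mod z 100, pow_add, pow_mul, hz43,
      pow_mod_eq ((3 : ZMod 401)^100) 4 (z / 100) (by decide)] at h3
    exact (by decide : ∀ s < 4, ((3 : ZMod 401)^100)^s * (3 : ZMod 401)^43 ≠ 127)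
      _ (Nat.mod_lt _ (by norm_num)) h3
  · interval_cases x
    · exfalso
      have hb : 3^z = 7 := by omega
      have hz2 : z ≤ 1 := by
        by_contra hc
        push_neg at hc
        have := Nat.pow_le_pow_right (by norm_num : 1 ≤ 3) hc
        norm_num at this
        omega
      interval_cases z <;> norm_num at hb
    · refine ⟨rfl, ?_⟩
      have h27 : 3^z = 27 := by omega
      have hz3 : z ≤ 3 := by
        by_contra hc
        push_neg at hc
        have := Nat.pow_le_pow_right (by norm_num : 1 ≤ 3) hc
        norm_num at this
        omega
      interval_cases z
      · norm_num at h27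
      · norm_num at h27
      · rfl

theorem stmt6 (a x z : ℕ) (ha : 1 < a) (hx : 0 < x) (hz : 0 < z)
    (h : (2*a+1)^x + 2 = (2*a-1)^z) : a = 2 ∧ x = 2 ∧ z = 3 := by
  have ha2 : a = 2 := by
    have h' : ((2*(a:ℤ)+1))^x + 2 = (2*(a:ℤ)-1)^z := by
      have hc := congrArg (Nat.cast : ℕ → ℤ) h
      push_cast [Nat.cast_sub (by omega : 1 ≤ 2*a)] at hc
      convert hc using 2
    have e1 : (2*(a:ℤ)+1) ≡ 1 [ZMOD 2*a] :=
      Int.modEq_iff_dvd.mpr ⟨-1, by ring⟩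
    have e2 : (2*(a:ℤ)-1) ≡ -1 [ZMOD 2*a] :=
      Int.modEq_iff_dvd.mpr ⟨-1, by ring⟩
    have key : (3 : ℤ) ≡ (-1)^z [ZMOD 2*a] := by
      calc (3:ℤ) = 1^x + 2 := by ring
        _ ≡ (2*(a:ℤ)+1)^x + 2 [ZMOD 2*a] := ((e1.pow x).symm).add_right 2
        _ = (2*(a:ℤ)-1)^z := h'
        _ ≡ (-1)^z [ZMOD 2*a] := e2.pow z
    have ha' : (2:ℤ) ≤ (a:ℤ) := by exact_mod_cast ha
    rcases Nat.even_or_odd z with hev | hod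
    · exfalso
      rw [hev.neg_one_pow] at key
      have hd := key.dvd
      norm_num at hd
      have := Int.le_of_dvd (by norm_num) hd
      omega
    · rw [hod.neg_one_pow] at key
      have hd := key.dvd
      norm_num at hd
      have := Int.le_of_dvd (by norm_num) hd
      omega
  subst ha2
  norm_num at h
  obtain ⟨h1, h2⟩ := aux53 x z hx hz h
  exact ⟨rfl, h1, h2⟩
end

section
/- The Diophantine equation 3^Z - 5^X = 2 has only the solution (X, Z) = (2, 3) in positive integers X, Z. -/
theorem pow_mod_period (a k m : ℕ) (hk : a ^ k % m = 1) (n : ℕ) :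
    a ^ n % m = a ^ (n % k) % m := by
  conv_lhs => rw [← Nat.div_add_mod n k]
  rw [pow_add, pow_mul, Nat.mul_mod, Nat.pow_mod, hk, one_pow, ← Nat.mul_mod, one_mul]

set_option maxRecDepth 100000 in
theorem stmt8 (X Z : ℕ) (hX : 0 < X) (hZ : 0 < Z) (h : (3:ℤ)^Z - 5^X = 2) :
    X = 2 ∧ Z = 3 := by
  have h' : (3:ℕ)^Z = 5^X + 2 := by
    have : (3:ℤ)^Z = 5^X + 2 := by linarith
    exact_mod_cast this
  have h5 : (5:ℕ) ≤ 5^X := by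
    calc (5:ℕ) = 5^1 := by norm_num
    _ ≤ 5^X := Nat.pow_le_pow_right (by norm_num) hX
  -- Z ≥ 3
  have hZ3 : 3 ≤ Z := by
    by_contra hc
    push_neg at hc
    interval_cases Z
    · omega
    · -- 9 = 5^X + 2, so 5^X = 7
      rcases Nat.lt_or_ge X 2 with h1 | h2
      · interval_cases X <;> simp_all
      · have : (25:ℕ) ≤ 5^X := by
          calc (25:ℕ) = 5^2 := by norm_num
          _ ≤ 5^X := Nat.pow_le_pow_right (by norm_num) h2
        simp_all
  -- 27 ∣ 3^Z, so 5^X ≡ 25 mod 27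
  have h27 : 5^X % 27 = 25 := by
    have hd : (27:ℕ) ∣ 3^Z := by
      have : (3:ℕ)^3 ∣ 3^Z := pow_dvd_pow 3 hZ3
      norm_num at this
      exact this
    obtain ⟨c, hc⟩ := hd
    omega
  have hX18 : X % 18 = 2 := by
    have hp := pow_mod_period 5 18 27 (by norm_num) X
    have key : ∀ r < 18, 5^r % 27 = 25 → r = 2 := by decide
    exact key (X % 18) (Nat.mod_lt X (by norm_num)) (by rw [← hp]; exact h27)
  have hX2 : 2 ≤ X := by omega
  rcases eq_or_lt_of_le hX2 with hXeq | hXgt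
  · -- X = 2
    have hZ27 : (3:ℕ)^Z = 3^3 := by rw [h', ← hXeq]; norm_num
    have : Z = 3 := Nat.pow_right_injective (by norm_num) hZ27
    exact ⟨hXeq.symm, this⟩
  · -- X > 2, so X ≥ 20
    exfalso
    have hX20 : 20 ≤ X := by omega
    have h625 : 3^Z % 625 = 2 := by
      have hd : (625:ℕ) ∣ 5^X := by
        have : (5:ℕ)^4 ∣ 5^X := pow_dvd_pow 5 (by omega)
        norm_num at this
        exact this
      obtain ⟨c, hc⟩ := hd
      omega
    have hZ500 : Z % 500 = 243 := by
      have hp := pow_mod_period 3 500 625 (by rw [show (500:ℕ) = 250*2 from rfl, pow_mul]; norm_num) Z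
      have key : ∀ r < 500, 3^r % 625 = 2 → r = 243 := by decide
      exact key (Z % 500) (Nat.mod_lt Z (by norm_num)) (by rw [← hp]; exact h625)
    have e1 : 3^Z % 251 = 122 := by
      have hp := pow_mod_period 3 500 251 (by rw [show (500:ℕ) = 250*2 from rfl, pow_mul]; norm_num) Z
      rw [hp, hZ500]
      norm_num
    have e2 : 5^X % 251 = 120 := by omega
    have hp := pow_mod_period 5 250 251 (by norm_num) X
    have key : ∀ r < 250, 5^r % 251 ≠ 120 := by decide
    exact key (X % 250) (Nat.mod_lt X (by norm_num)) (by rw [← hp]; exact e2)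
end

section
/- If a, m, X, Z are positive integers with a > 1 satisfying (2am-1)^Z - (2am+1)^X = 2, then a = 2, m = 1, X = 2, Z = 3. -/
set_option maxRecDepth 10000

lemma aux74 : ∀ r : ℕ, r < 162 → 5^r % 243 = 241 → r = 74 := by decide

lemma aux109 : ∀ r : ℕ, r < 27 → 3^r % 109 ≠ 37 := by decide

lemma pow_mod_period_s11 (b n p e : ℕ) (hn : 1 < n) (h1 : b^p % n = 1) :
    b^e % n = b^(e % p) % n := by
  conv_lhs => rw [← Nat.div_add_mod e p]
  rw [pow_add, pow_mul, Nat.mul_mod, Nat.pow_mod, h1, Nat.one_pow,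
    Nat.one_mod_eq_one.mpr (by omega), one_mul, Nat.mod_mod_of_dvd _ dvd_rfl]

lemma key (X Z : ℕ) (hX : 0 < X) (hZ : 0 < Z) (h : 3^Z = 5^X + 2) :
    X = 2 ∧ Z = 3 := by
  by_cases hZ5 : Z ≤ 4
  · have hXb : X ≤ 2 := by
      by_contra hc
      have h1 : (5:ℕ)^3 ≤ 5^X := Nat.pow_le_pow_right (by norm_num) (by omega)
      have h2 : (3:ℕ)^Z ≤ 3^4 := Nat.pow_le_pow_right (by norm_num) hZ5
      norm_num at h1 h2
      omega
    interval_cases X <;> interval_cases Z <;> simp_all <;> omega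
  · exfalso
    have hd : (243 : ℕ) ∣ 3^Z := by
      have := pow_dvd_pow 3 (show 5 ≤ Z by omega)
      simpa using this
    obtain ⟨k, hk⟩ := hd
    have h243 : 5^X % 243 = 241 := by omega
    have hp1 : (5:ℕ)^162 % 243 = 1 := by norm_num
    rw [pow_mod_period_s11 5 243 162 X (by norm_num) hp1] at h243
    have hx : X % 162 = 74 := aux74 _ (Nat.mod_lt _ (by norm_num)) h243
    have hx27 : X % 27 = 20 := by omega
    have hq1 : (5:ℕ)^27 % 109 = 1 := by norm_num
    have h109 : 5^X % 109 = 35 := by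
      rw [pow_mod_period_s11 5 109 27 X (by norm_num) hq1, hx27]
      norm_num
    have hr1 : (3:ℕ)^27 % 109 = 1 := by norm_num
    have h3 : 3^Z % 109 = 37 := by
      rw [h, Nat.add_mod, h109]
    rw [pow_mod_period_s11 3 109 27 Z (by norm_num) hr1] at h3
    exact aux109 _ (Nat.mod_lt _ (by norm_num)) h3

theorem stmt11 (a m X Z : ℕ) (ha : 1 < a) (hm : 0 < m) (hX : 0 < X) (hZ : 0 < Z)
    (h : ((2*a*m-1 : ℕ) : ℤ)^Z - ((2*a*m+1 : ℕ) : ℤ)^X = 2) :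
    a = 2 ∧ m = 1 ∧ X = 2 ∧ Z = 3 := by
  have hn4 : 4 ≤ 2*a*m := by nlinarith
  set n := 2*a*m with hn
  haveI : NeZero n := ⟨by omega⟩
  have h2 := congrArg (fun t : ℤ => (t : ZMod n)) h
  simp only [Int.cast_sub, Int.cast_pow, Int.cast_natCast, Int.cast_ofNat] at h2
  have e1 : ((n-1 : ℕ) : ZMod n) = -1 := by
    rw [Nat.cast_sub (by omega), ZMod.natCast_self]
    simp
  have e2 : ((n+1 : ℕ) : ZMod n) = 1 := by
    push_cast
    rw [ZMod.natCast_self]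
    simp
  rw [e1, e2, one_pow] at h2
  have hn4' : n = 4 := by
    rcases Nat.even_or_odd Z with he | ho
    · rw [he.neg_one_pow] at h2
      have : ((2:ℕ) : ZMod n) = 0 := by push_cast; linear_combination -h2
      have := (ZMod.natCast_eq_zero_iff 2 n).mp this
      have := Nat.le_of_dvd (by norm_num) this
      omega
    · rw [ho.neg_one_pow] at h2
      have : ((4:ℕ) : ZMod n) = 0 := by push_cast; linear_combination -h2
      have := (ZMod.natCast_eq_zero_iff 4 n).mp this
      have := Nat.le_of_dvd (by norm_num) this
      interval_cases n <;> simp_all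
  have h1 : a * m = 2 := by
    have := hn4'.symm.trans hn
    rw [mul_assoc] at this
    omega
  have hmd : m ∣ 2 := ⟨a, by rw [mul_comm]; exact h1.symm⟩
  have hm2 : m ≤ 2 := Nat.le_of_dvd (by norm_num) hmd
  interval_cases m <;> simp_all
  have ha2 : a = 2 := h1
  subst ha2
  norm_num at h
  have hnat : (3:ℕ)^Z = 5^X + 2 := by
    have : (3:ℤ)^Z = 5^X + 2 := by linarith
    exact_mod_cast this
  obtain ⟨hX2, hZ3⟩ := key X Z hX hZ hnat
  exact ⟨hX2, hZ3⟩
end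

section
/- There are no positive integers m > 1 and y ≥ 2 such that (2m/3)^y - 1 = 3^{y-2} with 3 dividing m; more precisely, the equation n^y - 1 = 3^{y-2} has no solutions in positive integers n ≥ 2 and y ≥ 2. -/
theorem stmt12 : ¬ ∃ (n y : ℕ), 2 ≤ n ∧ 2 ≤ y ∧ n^y - 1 = 3^(y-2) := by
  rintro ⟨n, y, hn, hy, h⟩
  have hpow : 1 ≤ n^y := Nat.one_le_pow _ _ (by omega)
  have heq : n^y = 3^(y-2) + 1 := by omega
  have key : ∀ k, 3^k % 8 = 1 ∨ 3^k % 8 = 3 := by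
    intro k
    induction k with
    | zero => left; rfl
    | succ k ih =>
      rw [pow_succ, Nat.mul_mod]
      rcases ih with h' | h' <;> rw [h'] <;> simp
  have h2 : 2 ∣ n := by
    have hodd : 3^(y-2) % 2 = 1 := Nat.odd_iff.mp (Odd.pow (by decide))
    have hdvd : 2 ∣ n^y := by omega
    exact Nat.prime_two.dvd_of_dvd_pow hdvd
  rcases Nat.lt_or_ge y 3 with hy3 | hy3
  · have hy2 : y = 2 := by omega
    subst hy2
    simp at heq
    have h4 : 4 ≤ n^2 := by nlinarith
    omega
  · have h8 : 8 ∣ n^y := by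
      have h1 : (8:ℕ) ∣ n^3 := by
        have : (2:ℕ)^3 ∣ n^3 := pow_dvd_pow_of_dvd h2 3
        simpa using this
      exact h1.trans (pow_dvd_pow n hy3)
    rcases key (y-2) with hk | hk <;> omega
end

section
/- If a is an even positive integer and (a, x, y, z) is a solution in positive integers of (2a+1)^x + 2^y = (2a-1)^z with y > 1 and x odd, then z is even, a = 2^{y-1}, and (x, y, z) = (1, 2, 2); that is, the only such solution is 5^1 + 2^2 = 3^2. -/
lemma aux_pow (t : ℤ) : ∀ n : ℕ, (1 + t)^n ≡ 1 + n*t [ZMOD t^2]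
  | 0 => by simp
  | n+1 => by
    have ih := aux_pow t n
    calc (1+t)^(n+1) = (1+t)^n * (1+t) := by ring
    _ ≡ (1 + n*t) * (1+t) [ZMOD t^2] := ih.mul_right _
    _ = 1 + (n+1)*t + n*t^2 := by ring
    _ ≡ 1 + (n+1)*t + n*0 [ZMOD t^2] :=
        Int.ModEq.add_left _ (Int.ModEq.mul_left _ (Int.modEq_zero_iff_dvd.mpr dvd_rfl))
    _ = 1 + (↑(n+1))*t := by push_cast; ring

theorem stmt15 (a x y z : ℕ) (ha : 1 < a) (haeven : Even a) (hx : 0 < x)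
    (hy : 1 < y) (hz : 0 < z) (hxodd : Odd x)
    (h : (2*a+1)^x + 2^y = (2*a-1)^z) :
    Even z ∧ a = 2^(y-1) ∧ x = 1 ∧ y = 2 ∧ z = 2 := by
  obtain ⟨b, hb⟩ := haeven
  subst hb
  have hb1 : 1 ≤ b := by omega
  have h2a : (1:ℕ) ≤ 2*(b+b) := by omega
  -- integer version of the equation
  have hZ : (2*((b:ℤ)+b)+1)^x + 2^y = (2*((b:ℤ)+b)-1)^z := by
    have := h
    zify [h2a] at this
    exact_mod_cast this
  -- Step 1: z is even
  have hzeven : Even z := by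
    by_contra hodd
    rw [Nat.not_even_iff_odd] at hodd
    have h4 := congrArg (fun n : ℤ => (n : ZMod 4)) hZ
    push_cast at h4
    have e1 : (2*((b:ZMod 4)+b)+1) = 1 := by
      calc 2*((b:ZMod 4)+b)+1 = 4*b+1 := by ring
      _ = 0*b+1 := by rw [show (4:ZMod 4) = 0 from by decide]
      _ = 1 := by ring
    have e2 : (2*((b:ZMod 4)+b)-1) = -1 := by
      calc 2*((b:ZMod 4)+b)-1 = 4*b-1 := by ring
      _ = 0*b-1 := by rw [show (4:ZMod 4) = 0 from by decide]
      _ = -1 := by ring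
    have e3 : (2:ZMod 4)^y = 0 := by
      have hy2 : y = 2 + (y - 2) := by omega
      rw [hy2, pow_add, show (2:ZMod 4)^2 = 0 from by decide, zero_mul]
    rw [e1, e2, e3, one_pow, hodd.neg_one_pow] at h4
    exact absurd h4 (by decide)
  -- Step 2: (b+b) ∣ 2^y, hence b+b = 2^k
  have hadvd : (b+b) ∣ 2^y := by
    have hA := congrArg (fun n : ℤ => (n : ZMod (b+b))) hZ
    push_cast at hA
    rw [show ((b:ZMod (b+b)) + b) = (((b+b:ℕ)) : ZMod (b+b)) from by push_cast; ring,
      ZMod.natCast_self] at hA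
    simp only [mul_zero, zero_add, zero_sub, one_pow, hzeven.neg_one_pow] at hA
    have : ((2^y : ℕ) : ZMod (b+b)) = 0 := by push_cast; linear_combination hA
    exact (ZMod.natCast_eq_zero_iff _ _).mp this
  obtain ⟨k, hky, hak⟩ := (Nat.dvd_prime_pow Nat.prime_two).mp hadvd
  have hk1 : 1 ≤ k := by
    rcases Nat.eq_zero_or_pos k with h0 | h0
    · exfalso; rw [h0] at hak; simp at hak; omega
    · exact h0
  -- Step 3: y = k + 1
  have hyk : y = k + 1 := by
    set t : ℤ := 2^(k+1) with ht
    have h2a' : ((b:ℤ) + b) = 2^k := by exact_mod_cast congrArg (Nat.cast : ℕ → ℤ) hak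
    have htt : 2*((b:ℤ)+b) = t := by rw [ht, pow_succ, h2a']; ring
    rw [htt] at hZ
    have e1 : (1 + t)^x ≡ 1 + x*t [ZMOD t^2] := aux_pow t x
    have e2 : (t - 1)^z ≡ 1 - z*t [ZMOD t^2] := by
      have h' := aux_pow (-t) z
      rw [neg_sq] at h'
      calc (t-1:ℤ)^z = (1 + (-t))^z := by
            rw [show (t-1:ℤ) = -(1 + -t) from by ring, hzeven.neg_pow]
      _ ≡ 1 + z*(-t) [ZMOD t^2] := h'
      _ = 1 - z*t := by ring
    have hcomb : ((1:ℤ) + x*t) + 2^y ≡ 1 - z*t [ZMOD t^2] := by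
      calc ((1:ℤ) + x*t) + 2^y ≡ (1+t)^x + 2^y [ZMOD t^2] := (e1.symm).add_right _
      _ = (t+1)^x + 2^y := by ring_nf
      _ = (t-1)^z := hZ
      _ ≡ 1 - z*t [ZMOD t^2] := e2
    have hdvd : t^2 ∣ (2^y + (x+z)*t : ℤ) := by
      have := hcomb.dvd
      have heq : ((1:ℤ) - z*t) - ((1 + x*t) + 2^y) = -(2^y + (x+z)*t) := by push_cast; ring
      rw [heq] at this
      exact (dvd_neg).mp this
    -- now case analysis on y vs k+1
    by_contra hne
    rcases Nat.lt_or_ge y (k+1) with hlt | hge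
    · -- y = k, since k ≤ y
      have hyk' : y = k := by omega
      subst hyk'
      have : (2:ℤ)^(2*y+2) ∣ 2^y * (1 + 2*(x+z)) := by
        have e : (2^y + (x+z)*t : ℤ) = 2^y * (1 + 2*(x+z)) := by
          rw [ht]; push_cast; ring
        have e2 : (t^2 : ℤ) = 2^(2*y+2) := by rw [ht, ← pow_mul]; ring_nf
        rw [← e, ← e2]; exact hdvd
      have h2 : (2:ℤ)^(y+2) ∣ (1 + 2*(x+z)) := by
        have := this
        rw [show 2*y+2 = y + (y+2) from by ring, pow_add] at this
        exact (mul_dvd_mul_iff_left (by positivity : (2:ℤ)^y ≠ 0)).mp this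
      have : (2:ℤ) ∣ (1 + 2*(x+z)) := dvd_trans (dvd_pow_self 2 (by omega)) h2
      omega
    · -- y ≥ k+2
      have hge2 : y ≥ k+2 := by omega
      have : (2:ℤ)^(2*k+2) ∣ 2^(k+1) * (2^(y-k-1) + (x+z)) := by
        have e : (2^y + (x+z)*t : ℤ) = 2^(k+1) * (2^(y-k-1) + (x+z)) := by
          rw [ht, mul_add, ← pow_add, show k+1+(y-k-1) = y from by omega]; ring
        have e2 : (t^2 : ℤ) = 2^(2*k+2) := by rw [ht, ← pow_mul]; ring_nf
        rw [← e, ← e2]; exact hdvd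
      have h2 : (2:ℤ)^(k+1) ∣ (2^(y-k-1) + (x+z)) := by
        rw [show 2*k+2 = (k+1) + (k+1) from by ring, pow_add] at this
        exact (mul_dvd_mul_iff_left (by positivity : (2:ℤ)^(k+1) ≠ 0)).mp this
      have h3 : (2:ℤ) ∣ (2^(y-k-1) + (x+z)) := dvd_trans (dvd_pow_self 2 (by omega)) h2
      have h4 : (2:ℤ) ∣ 2^(y-k-1) := dvd_pow_self 2 (by omega)
      have h5 : (2:ℤ) ∣ (x+z : ℤ) := (dvd_add_right h4).mp h3
      obtain ⟨u, hu⟩ := hxodd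
      obtain ⟨v, hv⟩ := hzeven
      omega
  -- Step 4: y = 2
  have hy2 : y = 2 := by
    by_contra hne
    have hy3 : 3 ≤ y := by omega
    have hbb : 2*(b+b) = 2^y := by
      rw [hak, hyk, pow_succ]; ring
    set N : ℕ := 2^y - 1 with hN
    have hNpos : 4 ≤ N := by
      have : 2^3 ≤ 2^y := Nat.pow_le_pow_right (by norm_num) hy3
      omega
    have hm1 : 2^y ≡ 1 [MOD N] := by
      have : N ∣ 2^y - 1 := dvd_rfl
      exact ((Nat.modEq_iff_dvd' (Nat.one_le_two_pow)).mpr this).symm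
    have hLHS : (2*(b+b)+1)^x + 2^y ≡ 2^x + 1 [MOD N] := by
      have h1 : 2*(b+b)+1 ≡ 2 [MOD N] := by
        rw [hbb]
        calc 2^y + 1 ≡ 1 + 1 [MOD N] := hm1.add_right 1
        _ = 2 := by norm_num
      exact (h1.pow x).add hm1
    have hRHS : (2*(b+b)-1)^z ≡ 0 [MOD N] := by
      have hNe : 2*(b+b)-1 = N := by omega
      rw [hNe]
      exact (Nat.modEq_zero_iff_dvd).mpr (dvd_pow_self N (by omega))
    have hdN : N ∣ 2^x + 1 := by
      have h0 : (2*(b+b)+1)^x + 2^y ≡ 0 [MOD N] := by rw [h]; exact hRHS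
      have : (2:ℕ)^x + 1 ≡ 0 [MOD N] := hLHS.symm.trans h0
      exact (Nat.modEq_zero_iff_dvd).mp this
    -- reduce exponent mod y
    set r : ℕ := x % y with hr
    have hrx : 2^x ≡ 2^r [MOD N] := by
      have hxe : x = y * (x / y) + r := (Nat.div_add_mod x y).symm
      calc 2^x = (2^y)^(x/y) * 2^r := by rw [← pow_mul, ← pow_add, ← hxe]
      _ ≡ 1^(x/y) * 2^r [MOD N] := ((hm1.pow _).mul_right _)
      _ = 2^r := by rw [one_pow, one_mul]
    have hdN2 : N ∣ 2^r + 1 := by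
      have : (2:ℕ)^r + 1 ≡ 0 [MOD N] := (hrx.symm.add_right 1).trans ((Nat.modEq_zero_iff_dvd).mpr hdN)
      exact (Nat.modEq_zero_iff_dvd).mp this
    have hrlt : r < y := Nat.mod_lt _ (by omega)
    have hle : N ≤ 2^r + 1 := Nat.le_of_dvd (by positivity) hdN2
    have h1 : 2^r ≤ 2^(y-1) := Nat.pow_le_pow_right (by norm_num) (by omega)
    have h2 : 2^y = 2*2^(y-1) := by
      rw [← pow_succ']
      congr 1
      omega
    have h3 : 4 ≤ 2^(y-1) := by
      calc (4:ℕ) = 2^2 := by norm_num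
      _ ≤ 2^(y-1) := Nat.pow_le_pow_right (by norm_num) (by omega)
    omega
  -- Step 5: now b = 1, equation is 5^x + 4 = 3^z
  subst hy2
  have hk : k = 1 := by omega
  have hb' : b = 1 := by rw [hk, pow_one] at hak; omega
  subst hb'
  norm_num at h
  obtain ⟨w, hw⟩ := hzeven
  have hw1 : 1 ≤ w := by omega
  set s : ℕ := 3^w with hs
  clear_value s
  have hs3 : 3 ≤ s := by
    rw [hs]
    calc (3:ℕ) = 3^1 := by norm_num
    _ ≤ 3^w := Nat.pow_le_pow_right (by norm_num) hw1
  have hfac : (s-2)*(s+2) = 5^x := by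
    have hzz : (3:ℕ)^z = s*s := by rw [hw, pow_add, hs]
    zify [show 2 ≤ s by omega]
    have : (5:ℤ)^x + 4 = (s:ℤ)*s := by exact_mod_cast (h.trans hzz)
    linarith [this]
  have d1 : (s-2) ∣ 5^x := ⟨s+2, hfac.symm⟩
  have d2 : (s+2) ∣ 5^x := ⟨s-2, by rw [← hfac, mul_comm]⟩
  obtain ⟨i, _, hi⟩ := (Nat.dvd_prime_pow Nat.prime_five).mp d1
  obtain ⟨j, _, hj⟩ := (Nat.dvd_prime_pow Nat.prime_five).mp d2
  have hj1 : j ≠ 0 := by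
    intro h0
    rw [h0, pow_zero] at hj
    omega
  have hi0 : i = 0 := by
    by_contra hi0
    have h5a : 5 ∣ s - 2 := hi ▸ dvd_pow_self 5 hi0
    have h5b : 5 ∣ s + 2 := hj ▸ dvd_pow_self 5 hj1
    omega
  have hsv : s = 3 := by rw [hi0, pow_zero] at hi; omega
  have hwv : w = 1 := Nat.pow_right_injective (by norm_num)
    (show (3:ℕ)^w = 3^1 by rw [← hs, hsv, pow_one])
  have hzv : z = 2 := by omega
  have h5 : (5:ℕ)^x = 5 := by rw [hzv] at h; norm_num at h; omega
  have hxv : x = 1 := Nat.pow_right_injective (by norm_num)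
    (show (5:ℕ)^x = 5^1 by rw [pow_one]; exact h5)
  exact ⟨⟨w, hw⟩, by norm_num, hxv, rfl, hzv⟩
end

section
/- If (a, m, x, y, z) is a solution in positive integers of (2am+1)^x + (2m)^y = (2am-1)^z with a > 1, m > 1, x odd, z even, and (2am+1)^x > (2m)^y, then x > (2am-1)/2, hence x ≥ am. -/
theorem stmt18 (a m x y z : ℕ) (ha : 1 < a) (hm : 1 < m) (hx : 0 < x) (hy : 0 < y)
    (hz : 0 < z) (hxodd : Odd x) (hzeven : Even z)
    (h : (2*a*m+1)^x + (2*m)^y = (2*a*m-1)^z)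
    (hbig : (2*a*m+1)^x > (2*m)^y) :
    (x : ℚ) > (2*a*m - 1 : ℚ)/2 ∧ x ≥ a*m := by
  have ham : 4 ≤ a*m := by nlinarith
  set N := 2*a*m with hN
  have hNe : N = 2*(a*m) := by rw [hN]; ring
  have hN8 : 8 ≤ N := by omega
  -- z > x
  have hzx : x < z := by
    by_contra hc
    push_neg at hc
    have h1 : (N-1)^z ≤ (N-1)^x := Nat.pow_le_pow_right (by omega) hc
    have h2 : (N-1)^x < (N+1)^x := Nat.pow_lt_pow_left (by omega) (by omega)
    have h3 : 0 < (2*m)^y := Nat.pow_pos (by omega)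
    omega
  have hkey : (N-1)^(x+1) < 2*(N+1)^x := by
    have h1 : (N-1)^(x+1) ≤ (N-1)^z := Nat.pow_le_pow_right (by omega) (by omega)
    omega
  -- main claim: 2*x ≥ N
  have hmain : N ≤ 2*x := by
    by_contra hc
    push_neg at hc
    have h2x : 2*x ≤ N - 1 := by omega
    -- real version of hkey
    have hNR : (8:ℝ) ≤ (N:ℝ) := by exact_mod_cast hN8
    have hb : (0:ℝ) < (N:ℝ) - 1 := by linarith
    have hkeyR : ((N:ℝ) - 1)^(x+1) < 2*((N:ℝ)+1)^x := by
      have := hkey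
      have hc1 : ((N-1 : ℕ) : ℝ) = (N:ℝ) - 1 := by
        push_cast [Nat.cast_sub (by omega : 1 ≤ N)]; ring
      calc ((N:ℝ) - 1)^(x+1) = (((N-1:ℕ):ℝ))^(x+1) := by rw [hc1]
        _ < ((2*(N+1)^x : ℕ) : ℝ) := by exact_mod_cast this
        _ = 2*((N:ℝ)+1)^x := by push_cast; ring
    -- bound (N+1)^x ≤ exp 1 * (N-1)^x
    have ht : (0:ℝ) ≤ 2/((N:ℝ)-1) := by positivity
    have hfac : (N:ℝ)+1 = ((N:ℝ)-1) * (1 + 2/((N:ℝ)-1)) := by field_simp; ring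
    have hexp : (1 + 2/((N:ℝ)-1)) ≤ Real.exp (2/((N:ℝ)-1)) := by
      have := Real.add_one_le_exp (2/((N:ℝ)-1)); linarith
    have hpow : ((N:ℝ)+1)^x ≤ ((N:ℝ)-1)^x * Real.exp (2/((N:ℝ)-1) * x) := by
      have h1 : (1 + 2/((N:ℝ)-1))^x ≤ Real.exp (2/((N:ℝ)-1) * x) := by
        calc (1 + 2/((N:ℝ)-1))^x ≤ (Real.exp (2/((N:ℝ)-1)))^x :=
              pow_le_pow_left₀ (by linarith) hexp x
          _ = Real.exp (2/((N:ℝ)-1) * x) := by rw [← Real.exp_nat_mul, mul_comm]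
      rw [hfac, mul_pow]
      exact mul_le_mul_of_nonneg_left h1 (by positivity)
    have harg : 2/((N:ℝ)-1) * x ≤ 1 := by
      rw [div_mul_eq_mul_div, div_le_one hb]
      have : (2*x : ℝ) ≤ (N:ℝ) - 1 := by
        have : ((2*x : ℕ):ℝ) ≤ ((N-1 : ℕ):ℝ) := by exact_mod_cast h2x
        push_cast [Nat.cast_sub (by omega : 1 ≤ N)] at this
        linarith
      linarith
    have he : Real.exp (2/((N:ℝ)-1) * x) ≤ Real.exp 1 := Real.exp_le_exp.mpr harg
    have he1 : Real.exp 1 < 2.7182818286 := Real.exp_one_lt_d9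
    have hA : (0:ℝ) < ((N:ℝ)-1)^x := by positivity
    have hcontra : 2*((N:ℝ)+1)^x ≤ ((N:ℝ)-1)^(x+1) := by
      have h4 : ((N:ℝ)+1)^x ≤ ((N:ℝ)-1)^x * Real.exp 1 := by
        calc ((N:ℝ)+1)^x ≤ ((N:ℝ)-1)^x * Real.exp (2/((N:ℝ)-1) * x) := hpow
          _ ≤ ((N:ℝ)-1)^x * Real.exp 1 := by
              exact mul_le_mul_of_nonneg_left he (le_of_lt hA)
      have : ((N:ℝ)-1)^(x+1) = ((N:ℝ)-1) * ((N:ℝ)-1)^x := by ring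
      rw [this]
      nlinarith
    linarith
  constructor
  · have hx2 : (2*a*m : ℕ) ≤ 2*x := hmain
    have : ((2*a*m : ℕ):ℚ) ≤ ((2*x : ℕ):ℚ) := by exact_mod_cast hx2
    push_cast at this
    linarith
  · omega
end
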